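/- In the operational semantics of the first-order affine language, progress holds: every well-formed configuration C is either terminal (its term component is skip) or there exists a configuration D with C ⤳ D. Moreover the small-step relation is deterministic: the successor D, if it exists, is unique. -/
import Mathlib


/-! Syntax and operational semantics of the first-order affine language (QPL fragment). -/

/-- Types with `n` free type variables (de Bruijn, the newly bound variable of `μ`
is the last one), over a set `α` of atomic types. -/
inductive Ty (α : Type) : ℕ → Type
  | var {n} (i : Fin n) : Ty α n
  | unit {n} : Ty α n
  | atom {n} (a : α) : Ty α n
  | sum {n} (A B : Ty α n) : Ty α n
  | tensor {n} (A B : Ty α n) : Ty α n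
  | mu {n} (A : Ty α (n + 1)) : Ty α n

namespace Ty

/-- Renaming of type variables. -/
def rename {α} : {n m : ℕ} → (Fin n → Fin m) → Ty α n → Ty α m
  | _, _, ρ, .var i => .var (ρ i)
  | _, _, _, .unit => .unit
  | _, _, _, .atom a => .atom a
  | _, _, ρ, .sum A B => .sum (A.rename ρ) (B.rename ρ)
  | _, _, ρ, .tensor A B => .tensor (A.rename ρ) (B.rename ρ)
  | _, _, ρ, .mu A => .mu (A.rename (fun i =>
      Fin.lastCases (Fin.last _) (fun j => (ρ j).castSucc) i))

/-- Parallel substitution of type variables. -/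
def subst {α} : {n m : ℕ} → (Fin n → Ty α m) → Ty α n → Ty α m
  | _, _, σ, .var i => σ i
  | _, _, _, .unit => .unit
  | _, _, _, .atom a => .atom a
  | _, _, σ, .sum A B => .sum (A.subst σ) (B.subst σ)
  | _, _, σ, .tensor A B => .tensor (A.subst σ) (B.subst σ)
  | _, _, σ, .mu A => .mu (A.subst (fun i =>
      Fin.lastCases (.var (Fin.last _)) (fun j => (σ j).rename Fin.castSucc) i))

/-- Substitution `A[B/X]` of `B` for the last type variable of `A`. -/
def subst1 {α} {n : ℕ} (A : Ty α (n + 1)) (B : Ty α n) : Ty α n :=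
  A.subst (fun i => Fin.lastCases B (fun j => .var j) i)

/-- The type `bit := I + I`. -/
def bit {α} : Ty α 0 := .sum .unit .unit

end Ty

/-- Values. -/
inductive Val (α : Type) : Type
  | star
  | inl (A B : Ty α 0) (v : Val α)
  | inr (A B : Ty α 0) (v : Val α)
  | pair (v w : Val α)
  | fold (A : Ty α 1) (v : Val α)

/-- Well-formed values `⊢ v : A`. -/
inductive Val.HasTy {α} : Val α → Ty α 0 → Prop
  | star : Val.HasTy .star .unit
  | inl {v A B} : Val.HasTy v A → Val.HasTy (.inl A B v) (.sum A B)
  | inr {v A B} : Val.HasTy v B → Val.HasTy (.inr A B v) (.sum A B)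
  | pair {v w A B} : Val.HasTy v A → Val.HasTy w B → Val.HasTy (.pair v w) (.tensor A B)
  | fold {v A} : Val.HasTy v (A.subst1 (.mu A)) → Val.HasTy (.fold A v) (.mu A)

/-- Terms (term variables are natural numbers). -/
inductive Tm (α : Type) : Type
  | newunit (u : ℕ)                                        -- new unit u
  | discard (x : ℕ)                                        -- discard x
  | seq (M N : Tm α)                                       -- M ; N
  | skip
  | whileLoop (b : ℕ) (M : Tm α)                           -- while b do M
  | letLeft (y : ℕ) (A B : Ty α 0) (x : ℕ)                 -- y = left_{A,B} x
  | letRight (y : ℕ) (A B : Ty α 0) (x : ℕ)                -- y = right_{A,B} x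
  | caseOf (y x₁ : ℕ) (M₁ : Tm α) (x₂ : ℕ) (M₂ : Tm α)     -- case y of {left x₁ → M₁ | right x₂ → M₂}
  | mkPair (x x₁ x₂ : ℕ)                                   -- x = (x₁, x₂)
  | unPair (x₁ x₂ x : ℕ)                                   -- (x₁, x₂) = x
  | fold (y : ℕ) (A : Ty α 1) (x : ℕ)                      -- y = fold_{μX.A} x
  | unfold (y x : ℕ)                                       -- y = unfold x

/-- Variable contexts (lists of typed variables; `Γ, x : A` is `Γ.snoc x A`). -/
inductive Ctx (α : Type) : Type
  | nil
  | snoc (Γ : Ctx α) (x : ℕ) (A : Ty α 0)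

/-- Term judgements `⊢ ⟨Γ⟩ M ⟨Δ⟩` (Figure: formation rules for terms). -/
inductive Tm.Wt {α} : Ctx α → Tm α → Ctx α → Prop
  | newunit {Γ : Ctx α} { u} : Tm.Wt Γ (.newunit u) (Γ.snoc u .unit)
  | discard {Γ : Ctx α} { x A} : Tm.Wt (Γ.snoc x A) (.discard x) Γ
  | skip {Γ : Ctx α}  : Tm.Wt Γ .skip Γ
  | seq {Γ : Ctx α} { Γ' Δ M N} : Tm.Wt Γ M Γ' → Tm.Wt Γ' N Δ → Tm.Wt Γ (.seq M N) Δ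
  | whileLoop {Γ : Ctx α} { b M} : Tm.Wt (Γ.snoc b .bit) M (Γ.snoc b .bit) →
      Tm.Wt (Γ.snoc b .bit) (.whileLoop b M) (Γ.snoc b .bit)
  | letLeft {Γ : Ctx α} { x y A B} : Tm.Wt (Γ.snoc x A) (.letLeft y A B x) (Γ.snoc y (.sum A B))
  | letRight {Γ : Ctx α} { x y A B} : Tm.Wt (Γ.snoc x B) (.letRight y A B x) (Γ.snoc y (.sum A B))
  | caseOf {Γ : Ctx α} { Δ y x₁ x₂ A B M₁ M₂} : Tm.Wt (Γ.snoc x₁ A) M₁ Δ → Tm.Wt (Γ.snoc x₂ B) M₂ Δ →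
      Tm.Wt (Γ.snoc y (.sum A B)) (.caseOf y x₁ M₁ x₂ M₂) Δ
  | mkPair {Γ : Ctx α} { x x₁ x₂ A B} :
      Tm.Wt ((Γ.snoc x₁ A).snoc x₂ B) (.mkPair x x₁ x₂) (Γ.snoc x (.tensor A B))
  | unPair {Γ : Ctx α} { x x₁ x₂ A B} :
      Tm.Wt (Γ.snoc x (.tensor A B)) (.unPair x₁ x₂ x) ((Γ.snoc x₁ A).snoc x₂ B)
  | fold {Γ : Ctx α} { x y A} :
      Tm.Wt (Γ.snoc x (A.subst1 (.mu A))) (.fold y A x) (Γ.snoc y (.mu A))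
  | unfold {Γ : Ctx α} { x y A} :
      Tm.Wt (Γ.snoc x (.mu A)) (.unfold y x) (Γ.snoc y (A.subst1 (.mu A)))

/-- Value assignments (`V, x = v` is `V.snoc x v`). -/
inductive VAssign (α : Type) : Type
  | nil
  | snoc (V : VAssign α) (x : ℕ) (v : Val α)

/-- Well-formed value assignments `Γ ⊢ V`. -/
inductive VAssign.Wt {α} : Ctx α → VAssign α → Prop
  | nil : VAssign.Wt .nil .nil
  | snoc {Γ : Ctx α} { V x v A} : VAssign.Wt Γ V → Val.HasTy v A →
      VAssign.Wt (Γ.snoc x A) (V.snoc x v)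

/-- The desugaring `if b then {N}` := `case b of {left u → b = left u | right u → b = right u; N}`
(here taking `u := b`). -/
def Tm.ifThen {α} (b : ℕ) (N : Tm α) : Tm α :=
  .caseOf b b (.letLeft b .unit .unit b) b (.seq (.letRight b .unit .unit b) N)

/-- Small step operational semantics on configurations `(M | V)`. -/
inductive Step {α} : Tm α × VAssign α → Tm α × VAssign α → Prop
  | newunit {u } {V : VAssign α} : Step (.newunit u, V) (.skip, V.snoc u .star)
  | discard {x v } {V : VAssign α} : Step (.discard x, V.snoc x v) (.skip, V)
  | seqSkip {N } {V : VAssign α} : Step (.seq .skip N, V) (N, V)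
  | seqStep {M M' N : Tm α} {V V' : VAssign α} : Step (M, V) (M', V') → Step (.seq M N, V) (.seq M' N, V')
  | whileLoop {b M v } {V : VAssign α} :
      Step (.whileLoop b M, V.snoc b v) (Tm.ifThen b (.seq M (.whileLoop b M)), V.snoc b v)
  | letLeft {y A B x v } {V : VAssign α} :
      Step (.letLeft y A B x, V.snoc x v) (.skip, V.snoc y (.inl A B v))
  | letRight {y A B x v } {V : VAssign α} :
      Step (.letRight y A B x, V.snoc x v) (.skip, V.snoc y (.inr A B v))
  | caseLeft {y x₁ M₁ x₂ M₂ A B v } {V : VAssign α} :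
      Step (.caseOf y x₁ M₁ x₂ M₂, V.snoc y (.inl A B v)) (M₁, V.snoc x₁ v)
  | caseRight {y x₁ M₁ x₂ M₂ A B v } {V : VAssign α} :
      Step (.caseOf y x₁ M₁ x₂ M₂, V.snoc y (.inr A B v)) (M₂, V.snoc x₂ v)
  | mkPair {x x₁ x₂ v₁ v₂ } {V : VAssign α} :
      Step (.mkPair x x₁ x₂, (V.snoc x₁ v₁).snoc x₂ v₂) (.skip, V.snoc x (.pair v₁ v₂))
  | unPair {x x₁ x₂ v₁ v₂ } {V : VAssign α} :
      Step (.unPair x₁ x₂ x, V.snoc x (.pair v₁ v₂)) (.skip, (V.snoc x₁ v₁).snoc x₂ v₂)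
  | fold {y A x v } {V : VAssign α} : Step (.fold y A x, V.snoc x v) (.skip, V.snoc y (.fold A v))
  | unfold {y x A v } {V : VAssign α} : Step (.unfold y x, V.snoc x (.fold A v)) (.skip, V.snoc y v)

/-- **Progress and determinism.** Every well-formed configuration `Γ; Δ ⊢ (M | V)` is
either terminal (its term component is `skip`) or has a successor under the small-step
relation; moreover the small-step relation is deterministic, so the successor is
unique. -/
theorem step_det {α} : ∀ (C D D' : Tm α × VAssign α), Step C D → Step C D' → D = D' := by
  intro C D D' h
  induction h generalizing D' with
  | seqSkip =>
    intro h'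
    cases h' with
    | seqSkip => rfl
    | seqStep h2 => cases h2
  | seqStep h ih =>
    intro h'
    cases h' with
    | seqSkip => cases h
    | seqStep h2 => have := ih _ h2; simp_all
  | _ => intro h'; cases h'; rfl

theorem progress {α} : ∀ {Γ Δ : Ctx α} {M : Tm α} {V : VAssign α},
    Tm.Wt Γ M Δ → VAssign.Wt Γ V →
    M = Tm.skip ∨ ∃ D : Tm α × VAssign α, Step (M, V) D := by
  intro Γ Δ M V h
  induction h generalizing V with
  | skip => intro _; exact Or.inl rfl
  | newunit => exact fun _ => Or.inr ⟨_, .newunit⟩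
  | discard => intro hV; cases hV; exact Or.inr ⟨_, .discard⟩
  | seq h1 h2 ih1 ih2 =>
    intro hV
    rcases ih1 hV with rfl | ⟨⟨M', V'⟩, hs⟩
    · exact Or.inr ⟨_, .seqSkip⟩
    · exact Or.inr ⟨_, .seqStep hs⟩
  | whileLoop h ih => intro hV; cases hV; exact Or.inr ⟨_, .whileLoop⟩
  | letLeft => intro hV; cases hV; exact Or.inr ⟨_, .letLeft⟩
  | letRight => intro hV; cases hV; exact Or.inr ⟨_, .letRight⟩
  | caseOf h1 h2 ih1 ih2 =>
    intro hV
    cases hV with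
    | snoc hV hv =>
      cases hv with
      | inl hv => exact Or.inr ⟨_, .caseLeft⟩
      | inr hv => exact Or.inr ⟨_, .caseRight⟩
  | mkPair => intro hV; cases hV with | snoc hV _ => cases hV; exact Or.inr ⟨_, .mkPair⟩
  | unPair =>
    intro hV
    cases hV with
    | snoc hV hv => cases hv with | pair h1 h2 => exact Or.inr ⟨_, .unPair⟩
  | fold => intro hV; cases hV; exact Or.inr ⟨_, .fold⟩
  | unfold =>
    intro hV
    cases hV with
    | snoc hV hv => cases hv with | fold h => exact Or.inr ⟨_, .unfold⟩

theorem progress_and_determinism {α} :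
    (∀ {Γ Δ : Ctx α} {M : Tm α} {V : VAssign α},
        Tm.Wt Γ M Δ → VAssign.Wt Γ V →
        M = Tm.skip ∨ ∃ D : Tm α × VAssign α, Step (M, V) D) ∧
    (∀ (C D D' : Tm α × VAssign α), Step C D → Step C D' → D = D') := by
  exact ⟨progress, step_det⟩
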